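/- arXiv:1808.02306 — 3 statements merged into one kernel-verified Lean document; each statement's English description precedes it below -/
import Mathlib

section
/- For n > 0, the function I⁻_n(t) = ∫₁^∞ √v · β^c_{1/2}(-4πnv) · e^{-4πtv} dv/v, defined for t > n, has a singularity of type n^{-1/2}·arcsin(√(n/t)) at t = n; that is, I⁻_n(t) - n^{-1/2}·arcsin(√(n/t)) extends real analytically across t = n. -/
open Real MeasureTheory

/-- `β^c_{1/2}(s) = ∫₀¹ e^{-st} t^{-1/2} dt`. -/
noncomputable def betaC (s : ℝ) : ℝ :=
  ∫ t in (0:ℝ)..1, Real.exp (-s * t) * t ^ (-(1:ℝ) / 2)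

/-- `I⁻_n(t) = ∫₁^∞ √v β^c_{1/2}(-4πnv) e^{-4πtv} dv/v`. -/
noncomputable def Iminus (n t : ℝ) : ℝ :=
  ∫ v in Set.Ioi (1:ℝ), Real.sqrt v * betaC (-4 * π * n * v) * Real.exp (-4 * π * t * v) / v

open Set

set_option linter.unusedSectionVars false

lemma rpow_half_integrableOn : IntegrableOn (fun u : ℝ => u ^ (-(1:ℝ)/2)) (Ioc 0 1) := by
  have := intervalIntegral.intervalIntegrable_rpow' (a := (0:ℝ)) (b := 1)
    (by norm_num : (-1:ℝ) < -(1:ℝ)/2)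
  rwa [intervalIntegrable_iff_integrableOn_Ioc_of_le zero_le_one] at this

lemma integral_rpow_half : ∫ u in Ioc (0:ℝ) 1, u ^ (-(1:ℝ)/2) = 2 := by
  rw [← intervalIntegral.integral_of_le zero_le_one]
  rw [integral_rpow (Or.inl (by norm_num))]
  rw [Real.zero_rpow (by norm_num)]
  norm_num

lemma betaC_eq (s : ℝ) :
    betaC s = ∫ u in Ioc (0:ℝ) 1, Real.exp (-s*u) * u ^ (-(1:ℝ)/2) := by
  rw [betaC, intervalIntegral.integral_of_le zero_le_one]

lemma measurable_betaC_integrand (s : ℝ) :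
    Measurable (fun u : ℝ => Real.exp (-s*u) * u ^ (-(1:ℝ)/2)) :=
  (Real.measurable_exp.comp (measurable_id.const_mul _)).mul (by measurability)

lemma betaC_integrand_integrableOn (s : ℝ) :
    IntegrableOn (fun u : ℝ => Real.exp (-s*u) * u ^ (-(1:ℝ)/2)) (Ioc 0 1) := by
  refine Integrable.mono' (g := fun u => Real.exp |s| * u ^ (-(1:ℝ)/2))
    (rpow_half_integrableOn.const_mul _)
    (measurable_betaC_integrand s).aestronglyMeasurable ?_
  filter_upwards [ae_restrict_mem measurableSet_Ioc] with u hu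
  have hu0 : (0:ℝ) < u := hu.1
  have h1 : Real.exp (-s*u) ≤ Real.exp |s| := by
    apply Real.exp_le_exp.2
    calc -s*u ≤ |(-s)*u| := le_abs_self _
    _ = |s| * u := by rw [abs_mul, abs_neg, abs_of_pos hu0]
    _ ≤ |s| * 1 := by nlinarith [abs_nonneg s, hu.1, hu.2]
    _ = |s| := mul_one _
  rw [Real.norm_eq_abs, abs_mul, abs_of_nonneg (Real.exp_pos _).le,
    abs_of_nonneg (Real.rpow_nonneg hu0.le _)]
  exact mul_le_mul_of_nonneg_right h1 (Real.rpow_nonneg hu0.le _)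

lemma betaC_nonneg (s : ℝ) : 0 ≤ betaC s := by
  rw [betaC_eq]
  refine setIntegral_nonneg measurableSet_Ioc fun u hu => ?_
  exact mul_nonneg (Real.exp_pos _).le (Real.rpow_nonneg hu.1.le _)

lemma betaC_le (s : ℝ) : betaC s ≤ 2 * Real.exp |s| := by
  rw [betaC_eq]
  calc ∫ u in Ioc (0:ℝ) 1, Real.exp (-s*u) * u ^ (-(1:ℝ)/2)
      ≤ ∫ u in Ioc (0:ℝ) 1, Real.exp |s| * u ^ (-(1:ℝ)/2) := by
        refine setIntegral_mono_on (betaC_integrand_integrableOn s)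
          (rpow_half_integrableOn.const_mul _) measurableSet_Ioc fun u hu => ?_
        have hu0 : (0:ℝ) < u := hu.1
        refine mul_le_mul_of_nonneg_right ?_ (Real.rpow_nonneg hu.1.le _)
        apply Real.exp_le_exp.2
        calc -s*u ≤ |(-s)*u| := le_abs_self _
        _ = |s| * u := by rw [abs_mul, abs_neg, abs_of_pos hu0]
        _ ≤ |s| * 1 := by nlinarith [abs_nonneg s, hu.1, hu.2]
        _ = |s| := mul_one _
    _ = 2 * Real.exp |s| := by rw [integral_const_mul, integral_rpow_half]; ring

lemma abs_betaC_le (s : ℝ) : |betaC s| ≤ 2 * Real.exp |s| :=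
  by rw [abs_of_nonneg (betaC_nonneg s)]; exact betaC_le s

lemma betaC_continuous : Continuous betaC := by
  rw [continuous_iff_continuousAt]
  intro s₀
  have : ContinuousAt (fun s => ∫ u in Ioc (0:ℝ) 1, Real.exp (-s*u) * u ^ (-(1:ℝ)/2)) s₀ := by
    apply continuousAt_of_dominated (bound := fun u => Real.exp (|s₀|+1) * u ^ (-(1:ℝ)/2))
    · exact Filter.Eventually.of_forall fun s => (measurable_betaC_integrand s).aestronglyMeasurable
    · filter_upwards [Metric.ball_mem_nhds s₀ one_pos] with s hs
      filter_upwards [ae_restrict_mem measurableSet_Ioc] with u hu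
      have hu0 : (0:ℝ) < u := hu.1
      have h1 : Real.exp (-s*u) ≤ Real.exp (|s₀|+1) := by
        apply Real.exp_le_exp.2
        have hs' : |s - s₀| < 1 := by simpa [Real.dist_eq] using hs
        have : |s| ≤ |s₀| + 1 := by
          have := abs_sub_abs_le_abs_sub s s₀
          linarith
        calc -s*u ≤ |(-s)*u| := le_abs_self _
        _ = |s| * u := by rw [abs_mul, abs_neg, abs_of_pos hu0]
        _ ≤ (|s₀|+1) * 1 := by nlinarith [abs_nonneg s, hu.1, hu.2]
        _ = |s₀|+1 := mul_one _
      rw [Real.norm_eq_abs, abs_mul, abs_of_nonneg (Real.exp_pos _).le,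
        abs_of_nonneg (Real.rpow_nonneg hu0.le _)]
      exact mul_le_mul_of_nonneg_right h1 (Real.rpow_nonneg hu0.le _)
    · exact rpow_half_integrableOn.const_mul _
    · filter_upwards [ae_restrict_mem measurableSet_Ioc] with u _
      exact ((continuous_id.neg.mul continuous_const).rexp.mul continuous_const).continuousAt
  refine this.congr ?_
  filter_upwards with s using (betaC_eq s).symm

lemma inner_integrable {r : ℝ} (hr : 0 < r) :
    IntegrableOn (fun v : ℝ => v ^ (-(1:ℝ)/2) * Real.exp (-r*v)) (Ioi 0) := by
  have := integrableOn_rpow_mul_exp_neg_mul_rpow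
    (by norm_num : (-1:ℝ) < -(1:ℝ)/2) (by norm_num : (0:ℝ) < 1) hr
  refine this.congr_fun (fun x hx => ?_) measurableSet_Ioi
  simp only [Real.rpow_one]

lemma inner_integral {r : ℝ} (hr : 0 < r) :
    ∫ v in Ioi (0:ℝ), v ^ (-(1:ℝ)/2) * Real.exp (-r*v)
      = Real.sqrt π / Real.sqrt r := by
  have h := Real.integral_rpow_mul_exp_neg_mul_Ioi (a := (1:ℝ)/2) (r := r)
    (by norm_num) hr
  have h2 : ∫ v in Ioi (0:ℝ), v ^ (-(1:ℝ)/2) * Real.exp (-r*v)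
      = ∫ t in Ioi (0:ℝ), t ^ ((1:ℝ)/2 - 1) * Real.exp (-(r * t)) := by
    refine setIntegral_congr_fun measurableSet_Ioi (fun x hx => ?_)
    norm_num
  rw [h2, h, Real.Gamma_one_half_eq, ← Real.sqrt_eq_rpow, one_div, Real.sqrt_inv]
  rw [inv_mul_eq_div]

lemma sqrt_4pi (a : ℝ) (ha : 0 < a) :
    Real.sqrt π / Real.sqrt (4*π*a) = 1 / (2 * Real.sqrt a) := by
  rw [show (4:ℝ)*π*a = 4*(π*a) by ring, Real.sqrt_mul (by norm_num) (π*a),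
    Real.sqrt_mul pi_pos.le a, show Real.sqrt 4 = 2 by
      rw [show (4:ℝ) = 2^2 by norm_num, Real.sqrt_sq (by norm_num)]]
  have h1 : Real.sqrt π ≠ 0 := ne_of_gt (Real.sqrt_pos.2 pi_pos)
  field_simp

section FTC
variable {n t : ℝ} (hn : 0 < n) (ht : n < t)
include hn ht

lemma deriv_psi {u : ℝ} (hu : u ∈ Ioo (0:ℝ) 1) :
    HasDerivAt (fun u => n ^ (-(1:ℝ)/2) * Real.arcsin (Real.sqrt (n*u/t)))
      (u ^ (-(1:ℝ)/2) / (2 * Real.sqrt (t - n*u))) u := by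
  have ht0 : (0:ℝ) < t := hn.trans ht
  have hu0 : 0 < u := hu.1
  have hnut : n * u < t := by nlinarith [hu.2]
  have hx0 : 0 < n*u/t := by positivity
  have hx1 : n*u/t < 1 := (div_lt_one ht0).2 hnut
  have h1 : HasDerivAt (fun u : ℝ => n*u/t) (n/t) u := by
    simpa using ((hasDerivAt_id u).const_mul n).div_const t
  have h2 : HasDerivAt Real.sqrt (1 / (2 * Real.sqrt (n*u/t))) (n*u/t) :=
    Real.hasDerivAt_sqrt (ne_of_gt hx0)
  have hs1 : Real.sqrt (n*u/t) < 1 := by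
    rw [show (1:ℝ) = Real.sqrt 1 by simp]
    exact Real.sqrt_lt_sqrt hx0.le hx1
  have hsm : -1 < Real.sqrt (n*u/t) := lt_of_lt_of_le (by norm_num) (Real.sqrt_nonneg _)
  have h3 : HasDerivAt Real.arcsin (1 / Real.sqrt (1 - Real.sqrt (n*u/t) ^ 2))
      (Real.sqrt (n*u/t)) := Real.hasDerivAt_arcsin (ne_of_gt hsm) (ne_of_lt hs1)
  have hcomp := ((h3.comp u (h2.comp u h1)).const_mul (n ^ (-(1:ℝ)/2)))
  refine hcomp.congr_deriv (Eq.symm ?_)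
  rw [Real.sq_sqrt hx0.le]
  have e1 : 1 - n*u/t = (t - n*u)/t := by field_simp
  have e2 : Real.sqrt ((t - n*u)/t) = Real.sqrt (t-n*u) / Real.sqrt t :=
    Real.sqrt_div (by nlinarith) t
  have e3 : Real.sqrt (n*u/t) = Real.sqrt n * Real.sqrt u / Real.sqrt t := by
    rw [Real.sqrt_div (by positivity) t, Real.sqrt_mul hn.le]
  have hrn : n ^ (-(1:ℝ)/2) = 1 / Real.sqrt n := by
    rw [show (-(1:ℝ)/2) = -((1:ℝ)/2) by norm_num, Real.rpow_neg hn.le,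
      ← Real.sqrt_eq_rpow, one_div]
  have hru : u ^ (-(1:ℝ)/2) = 1 / Real.sqrt u := by
    rw [show (-(1:ℝ)/2) = -((1:ℝ)/2) by norm_num, Real.rpow_neg hu0.le,
      ← Real.sqrt_eq_rpow, one_div]
  rw [e1, e2, e3, hrn, hru]
  have sn : Real.sqrt n * Real.sqrt n = n := Real.mul_self_sqrt hn.le
  have st : Real.sqrt t * Real.sqrt t = t := Real.mul_self_sqrt ht0.le
  have hsnn : Real.sqrt n ≠ 0 := ne_of_gt (Real.sqrt_pos.2 hn)
  have hstn : Real.sqrt t ≠ 0 := ne_of_gt (Real.sqrt_pos.2 ht0)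
  have hsun : Real.sqrt u ≠ 0 := ne_of_gt (Real.sqrt_pos.2 hu0)
  have hstnun : Real.sqrt (t - n*u) ≠ 0 := ne_of_gt (Real.sqrt_pos.2 (by nlinarith))
  field_simp
  linear_combination t*sn - n*st

lemma integrable_u_integrand :
    IntegrableOn (fun u : ℝ => u ^ (-(1:ℝ)/2) / (2 * Real.sqrt (t - n*u))) (Ioc 0 1) := by
  have ht0 : (0:ℝ) < t - n := by linarith
  have m1 : Measurable (fun u : ℝ => u ^ (-(1:ℝ)/2)) := by measurability
  have m2 : Measurable (fun u : ℝ => 2 * Real.sqrt (t - n*u)) :=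
    (continuous_const.mul (Real.continuous_sqrt.comp
      (continuous_const.sub (continuous_const.mul continuous_id)))).measurable
  have hmeas : Measurable (fun u : ℝ => u ^ (-(1:ℝ)/2) / (2 * Real.sqrt (t - n*u))) :=
    m1.div m2
  refine Integrable.mono' (g := fun u => (1 / (2 * Real.sqrt (t-n))) * u ^ (-(1:ℝ)/2))
    (rpow_half_integrableOn.const_mul _) hmeas.aestronglyMeasurable ?_
  filter_upwards [ae_restrict_mem measurableSet_Ioc] with u hu
  have hu0 : 0 < u := hu.1
  have h1 : t - n ≤ t - n*u := by nlinarith [hu.2]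
  have h2 : Real.sqrt (t-n) ≤ Real.sqrt (t - n*u) := Real.sqrt_le_sqrt h1
  have h3 : 0 < Real.sqrt (t-n) := Real.sqrt_pos.2 ht0
  rw [Real.norm_eq_abs, abs_of_nonneg (by positivity)]
  rw [div_eq_mul_inv, mul_comm (1 / (2 * Real.sqrt (t-n)))]
  refine mul_le_mul_of_nonneg_left ?_ (Real.rpow_nonneg hu0.le _)
  rw [one_div]
  exact inv_anti₀ (by positivity) (by linarith)

lemma u_integral :
    ∫ u in Ioc (0:ℝ) 1, u ^ (-(1:ℝ)/2) / (2 * Real.sqrt (t - n*u))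
      = n ^ (-(1:ℝ)/2) * Real.arcsin (Real.sqrt (n/t)) := by
  have ht0 : (0:ℝ) < t := hn.trans ht
  have hcont : ContinuousOn (fun u => n ^ (-(1:ℝ)/2) * Real.arcsin (Real.sqrt (n*u/t)))
      (Icc 0 1) := by
    apply Continuous.continuousOn
    exact continuous_const.mul (Real.continuous_arcsin.comp (Real.continuous_sqrt.comp
      ((continuous_const.mul continuous_id).div_const t)))
  have hint : IntervalIntegrable (fun u : ℝ => u ^ (-(1:ℝ)/2) / (2 * Real.sqrt (t - n*u)))
      volume 0 1 := by
    rw [intervalIntegrable_iff_integrableOn_Ioc_of_le zero_le_one]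
    exact integrable_u_integrand hn ht
  have key := intervalIntegral.integral_eq_sub_of_hasDeriv_right_of_le zero_le_one hcont
    (fun u hu => (deriv_psi hn ht hu).hasDerivWithinAt) hint
  rw [intervalIntegral.integral_of_le zero_le_one] at key
  rw [key]
  norm_num
end FTC

set_option linter.unusedSectionVars false

/-- the kernel -/
noncomputable def Pker (n t : ℝ) : ℝ × ℝ → ℝ := fun p =>
  p.1 ^ (-(1:ℝ)/2) * (p.2 ^ (-(1:ℝ)/2) * Real.exp (-(4*π*(t - n*p.1))*p.2))

/-- the integrand of Iminus -/
noncomputable def fI (n t : ℝ) : ℝ → ℝ := fun v =>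
  Real.sqrt v * betaC (-4 * π * n * v) * Real.exp (-4 * π * t * v) / v

section Fubini
variable {n t : ℝ} (hn : 0 < n) (ht : n < t)

lemma Pker_meas : Measurable (Pker n t) := by
  have m0 : Measurable (fun x : ℝ => x ^ (-(1:ℝ)/2)) := by measurability
  have c1 : Continuous fun p : ℝ×ℝ => Real.exp (-(4*π*(t - n*p.1))*p.2) := by
    apply Real.continuous_exp.comp
    fun_prop
  exact (m0.comp measurable_fst).mul ((m0.comp measurable_snd).mul c1.measurable)

include hn ht

lemma apos {u : ℝ} (hu : u ∈ Ioc (0:ℝ) 1) : 0 < 4*π*(t - n*u) := by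
  have : n * u ≤ n := by nlinarith [hu.1, hu.2]
  have : 0 < t - n*u := by linarith
  positivity

lemma Pker_slice_integrable {u : ℝ} (hu : u ∈ Ioc (0:ℝ) 1) :
    Integrable (fun v => Pker n t (u, v)) (volume.restrict (Ioi 0)) := by
  simpa only [Pker] using (inner_integrable (apos hn ht hu)).const_mul (u ^ (-(1:ℝ)/2))

lemma Pker_slice_integral {u : ℝ} (hu : u ∈ Ioc (0:ℝ) 1) :
    ∫ v in Ioi (0:ℝ), Pker n t (u, v) = u ^ (-(1:ℝ)/2) / (2 * Real.sqrt (t - n*u)) := by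
  have h0 : 0 < t - n*u := by nlinarith [hu.1, hu.2, hn, ht]
  simp only [Pker]
  rw [MeasureTheory.integral_const_mul, inner_integral (apos hn ht hu), sqrt_4pi _ h0, mul_one_div]

lemma Pker_integrable :
    Integrable (Pker n t)
      ((volume.restrict (Ioc (0:ℝ) 1)).prod (volume.restrict (Ioi (0:ℝ)))) := by
  refine (integrable_prod_iff (Pker_meas).aestronglyMeasurable).2 ⟨?_, ?_⟩
  · filter_upwards [ae_restrict_mem measurableSet_Ioc] with u hu
    exact Pker_slice_integrable hn ht hu
  · refine Integrable.congr (integrable_u_integrand hn ht) ?_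
    filter_upwards [ae_restrict_mem measurableSet_Ioc] with u hu
    rw [← Pker_slice_integral hn ht hu]
    refine integral_congr_ae ?_
    filter_upwards [ae_restrict_mem measurableSet_Ioi] with v hv
    have h1 : (0:ℝ) < u := hu.1
    have h2 : (0:ℝ) < v := hv
    simp only [Pker, Real.norm_eq_abs]
    rw [abs_of_nonneg (by positivity)]

lemma marginal_eq {v : ℝ} (hv : v ∈ Ioi (0:ℝ)) :
    ∫ u in Ioc (0:ℝ) 1, Pker n t (u, v) = fI n t v := by
  have hv0 : (0:ℝ) < v := hv
  have hsv : Real.sqrt v ≠ 0 := ne_of_gt (Real.sqrt_pos.2 hv0)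
  have hexp : ∀ u : ℝ, Real.exp (-(4*π*(t - n*u))*v)
      = Real.exp (-(-4*π*n*v)*u) * Real.exp (-4*π*t*v) := by
    intro u; rw [← Real.exp_add]; ring_nf
  have : ∫ u in Ioc (0:ℝ) 1, Pker n t (u, v)
      = (v ^ (-(1:ℝ)/2) * Real.exp (-4*π*t*v)) *
        ∫ u in Ioc (0:ℝ) 1, Real.exp (-(-4*π*n*v)*u) * u ^ (-(1:ℝ)/2) := by
    rw [← MeasureTheory.integral_const_mul]
    refine setIntegral_congr_fun measurableSet_Ioc (fun u hu => ?_)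
    simp only [Pker]
    rw [hexp u]
    ring
  rw [this, ← betaC_eq, fI]
  have hvr : v ^ (-(1:ℝ)/2) = Real.sqrt v / v := by
    rw [show (-(1:ℝ)/2) = -((1:ℝ)/2) by norm_num, Real.rpow_neg hv0.le, ← Real.sqrt_eq_rpow]
    rw [eq_div_iff (ne_of_gt hv0), ← Real.sqrt_mul_self hv0.le]
    field_simp
    rw [Real.sq_sqrt (Real.sqrt_nonneg _)]
  rw [hvr]
  ring_nf

lemma fI_integrableOn_Ioi0 : IntegrableOn (fI n t) (Ioi 0) := by
  refine Integrable.congr ((Pker_integrable hn ht).integral_prod_right) ?_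
  filter_upwards [ae_restrict_mem measurableSet_Ioi] with v hv
  exact marginal_eq hn ht hv

lemma total_integral :
    ∫ v in Ioi (0:ℝ), fI n t v = n ^ (-(1:ℝ)/2) * Real.arcsin (Real.sqrt (n/t)) := by
  have h1 : ∫ v in Ioi (0:ℝ), fI n t v
      = ∫ v in Ioi (0:ℝ), ∫ u in Ioc (0:ℝ) 1, Pker n t (u, v) := by
    refine setIntegral_congr_fun measurableSet_Ioi (fun v hv => (marginal_eq hn ht hv).symm)
  have h2 := integral_integral_swap (f := fun u v => Pker n t (u, v))
    (μ := volume.restrict (Ioc (0:ℝ) 1)) (ν := volume.restrict (Ioi (0:ℝ)))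
    (Pker_integrable hn ht)
  rw [h1, ← h2, ← u_integral hn ht]
  refine setIntegral_congr_fun measurableSet_Ioc (fun u hu => Pker_slice_integral hn ht hu)

lemma Iminus_split :
    (∫ v in Ioi (1:ℝ), fI n t v)
      = n ^ (-(1:ℝ)/2) * Real.arcsin (Real.sqrt (n/t)) - ∫ v in Ioc (0:ℝ) 1, fI n t v := by
  have hunion : Ioc (0:ℝ) 1 ∪ Ioi 1 = Ioi 0 := Ioc_union_Ioi_eq_Ioi zero_le_one
  have hdisj : Disjoint (Ioc (0:ℝ) 1) (Ioi 1) := Ioc_disjoint_Ioi le_rfl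
  have h1 : IntegrableOn (fI n t) (Ioc (0:ℝ) 1) :=
    (fI_integrableOn_Ioi0 hn ht).mono_set (by rw [← hunion]; exact subset_union_left)
  have h2 : IntegrableOn (fI n t) (Ioi (1:ℝ)) :=
    (fI_integrableOn_Ioi0 hn ht).mono_set (by rw [← hunion]; exact subset_union_right)
  have := setIntegral_union hdisj measurableSet_Ioi h1 h2
  rw [hunion] at this
  rw [total_integral hn ht] at this
  linarith [this]
end Fubini

/-- `h n v = v^{-1/2} betaC(-4πnv)` -/
noncomputable def hker (n : ℝ) : ℝ → ℝ := fun v =>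
  v ^ (-(1:ℝ)/2) * betaC (-4 * π * n * v)

section Analytic
variable {n : ℝ} (hn : 0 < n)

lemma hker_meas : Measurable (hker n) := by
  have m0 : Measurable (fun x : ℝ => x ^ (-(1:ℝ)/2)) := by measurability
  exact m0.mul (betaC_continuous.measurable.comp (measurable_id.const_mul _))

include hn

lemma hker_abs_le {v : ℝ} (hv : v ∈ Ioc (0:ℝ) 1) :
    |hker n v| ≤ (2 * Real.exp (4*π*n)) * v ^ (-(1:ℝ)/2) := by
  have hv0 : 0 < v := hv.1
  simp only [hker]
  rw [abs_mul, abs_of_nonneg (Real.rpow_nonneg hv0.le _), mul_comm (2 * Real.exp (4*π*n))]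
  refine mul_le_mul_of_nonneg_left ?_ (Real.rpow_nonneg hv0.le _)
  refine (abs_betaC_le _).trans ?_
  have h1 : |(-4) * π * n * v| ≤ 4*π*n := by
    have habs : |(-4:ℝ)| = 4 := by norm_num
    rw [abs_mul, abs_mul, abs_mul, habs, abs_of_pos pi_pos, abs_of_pos hn, abs_of_pos hv0]
    nlinarith [mul_nonneg (mul_nonneg (mul_nonneg (by norm_num : (0:ℝ) ≤ 4) pi_pos.le) hn.le)
      (sub_nonneg.2 hv.2)]
  have := Real.exp_le_exp.2 h1
  linarith

lemma hker_integrableOn : IntegrableOn (hker n) (Ioc 0 1) := by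
  refine Integrable.mono' (g := fun v => (2 * Real.exp (4*π*n)) * v ^ (-(1:ℝ)/2))
    (rpow_half_integrableOn.const_mul _) (hker_meas).aestronglyMeasurable ?_
  filter_upwards [ae_restrict_mem measurableSet_Ioc] with v hv
  rw [Real.norm_eq_abs]
  exact hker_abs_le hn hv

/-- complexified Laplace-type transform of `hker` over `(0,1]`. -/
noncomputable def Gfun (n : ℝ) : ℂ → ℂ := fun z =>
  ∫ v in Ioc (0:ℝ) 1, (hker n v : ℂ) * Complex.exp (-(4*π*(v:ℂ)) * z)

lemma Gfun_meas (z : ℂ) :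
    AEStronglyMeasurable (fun v : ℝ => (hker n v : ℂ) * Complex.exp (-(4*π*(v:ℂ)) * z))
      (volume.restrict (Ioc 0 1)) := by
  refine (Measurable.mul ?_ ?_).aestronglyMeasurable
  · exact Complex.measurable_ofReal.comp hker_meas
  · exact (Complex.continuous_exp.comp
      (((continuous_const.mul Complex.continuous_ofReal).neg).mul continuous_const)).measurable

lemma Gfun_norm_le (z : ℂ) {v : ℝ} (hv : v ∈ Ioc (0:ℝ) 1) :
    ‖(hker n v : ℂ) * Complex.exp (-(4*π*(v:ℂ)) * z)‖ ≤ |hker n v| * Real.exp (4*π*‖z‖) := by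
  have hv0 : 0 < v := hv.1
  rw [norm_mul, Complex.norm_real, Real.norm_eq_abs, Complex.norm_exp]
  refine mul_le_mul_of_nonneg_left ?_ (abs_nonneg _)
  apply Real.exp_le_exp.2
  have : (-(4*π*(v:ℂ)) * z).re = -(4*π*v) * z.re := by
    simp [Complex.mul_re]
  rw [this]
  calc -(4*π*v) * z.re ≤ |(-(4*π*v)) * z.re| := le_abs_self _
  _ = (4*π*v) * |z.re| := by
      rw [abs_mul, abs_neg, abs_of_pos (by positivity : (0:ℝ) < 4*π*v)]
  _ ≤ (4*π*1) * ‖z‖ := by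
      have h1 : |z.re| ≤ ‖z‖ := Complex.abs_re_le_norm z
      have h2 : (4*π*v) ≤ 4*π*1 := by nlinarith [pi_pos, hv.2]
      have h3 : (0:ℝ) ≤ |z.re| := abs_nonneg _
      nlinarith [norm_nonneg z, pi_pos, hv0]
  _ = 4*π*‖z‖ := by ring

lemma Gfun_integrable (z : ℂ) :
    Integrable (fun v : ℝ => (hker n v : ℂ) * Complex.exp (-(4*π*(v:ℂ)) * z))
      (volume.restrict (Ioc 0 1)) := by
  refine Integrable.mono' (g := fun v => |hker n v| * Real.exp (4*π*‖z‖))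
    ((hker_integrableOn hn).abs.mul_const _) (Gfun_meas hn z) ?_
  filter_upwards [ae_restrict_mem measurableSet_Ioc] with v hv
  exact Gfun_norm_le hn z hv

lemma Gfun_hasDerivAt (z₀ : ℂ) :
    HasDerivAt (Gfun n)
      (∫ v in Ioc (0:ℝ) 1, (hker n v : ℂ) * (-(4*π*(v:ℂ))) * Complex.exp (-(4*π*(v:ℂ)) * z₀))
      z₀ := by
  have key := hasDerivAt_integral_of_dominated_loc_of_deriv_le
    (F := fun z (v : ℝ) => (hker n v : ℂ) * Complex.exp (-(4*π*(v:ℂ)) * z))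
    (F' := fun z (v : ℝ) => (hker n v : ℂ) * (-(4*π*(v:ℂ))) * Complex.exp (-(4*π*(v:ℂ)) * z))
    (μ := volume.restrict (Ioc (0:ℝ) 1)) (x₀ := z₀)
    (bound := fun v => |hker n v| * (4*π) * Real.exp (4*π*(‖z₀‖+1)))
    (Metric.ball_mem_nhds z₀ one_pos) ?_ (Gfun_integrable hn z₀) ?_ ?_ ?_ ?_
  · exact key.2
  · exact Filter.Eventually.of_forall fun z => Gfun_meas hn z
  · refine (Measurable.mul (Measurable.mul ?_ ?_) ?_).aestronglyMeasurable
    · exact Complex.measurable_ofReal.comp hker_meas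
    · exact ((continuous_const.mul Complex.continuous_ofReal).neg).measurable
    · exact (Complex.continuous_exp.comp
        (((continuous_const.mul Complex.continuous_ofReal).neg).mul continuous_const)).measurable
  · filter_upwards [ae_restrict_mem measurableSet_Ioc] with v hv
    intro z hz
    have hv0 : 0 < v := hv.1
    have hz1 : ‖z‖ ≤ ‖z₀‖ + 1 := by
      have := mem_ball_iff_norm.1 hz
      calc ‖z‖ = ‖z₀ + (z - z₀)‖ := by ring_nf
      _ ≤ ‖z₀‖ + ‖z - z₀‖ := norm_add_le _ _
      _ ≤ ‖z₀‖ + 1 := by linarith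
    rw [norm_mul, norm_mul, Complex.norm_real, Real.norm_eq_abs]
    have e1 : ‖(-(4*π*(v:ℂ)))‖ = 4*π*v := by
      rw [norm_neg]
      have : (4*π*(v:ℂ)) = ((4*π*v : ℝ) : ℂ) := by push_cast; ring
      rw [this, Complex.norm_real, Real.norm_eq_abs, abs_of_pos (by positivity)]
    have e2 : ‖Complex.exp (-(4*π*(v:ℂ)) * z)‖ ≤ Real.exp (4*π*(‖z₀‖+1)) := by
      rw [Complex.norm_exp]
      apply Real.exp_le_exp.2
      have : (-(4*π*(v:ℂ)) * z).re = -(4*π*v) * z.re := by simp [Complex.mul_re]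
      rw [this]
      calc -(4*π*v) * z.re ≤ |(-(4*π*v)) * z.re| := le_abs_self _
      _ = (4*π*v) * |z.re| := by
          rw [abs_mul, abs_neg, abs_of_pos (by positivity : (0:ℝ) < 4*π*v)]
      _ ≤ 4*π*(‖z₀‖+1) := by
          have h1 : |z.re| ≤ ‖z₀‖ + 1 := (Complex.abs_re_le_norm z).trans hz1
          have h2 : v ≤ 1 := hv.2
          have h4 : (0:ℝ) ≤ 4*π*v := by positivity
          calc (4*π*v) * |z.re| ≤ (4*π*v) * (‖z₀‖+1) := by
                refine mul_le_mul_of_nonneg_left h1 h4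
          _ ≤ 4*π*(‖z₀‖+1) := by
                have h5 : (0:ℝ) ≤ ‖z₀‖+1 := by positivity
                nlinarith [mul_nonneg (mul_nonneg
                  (by positivity : (0:ℝ) ≤ 4*π) (sub_nonneg.2 h2)) h5]
    rw [e1]
    have h2 : v ≤ 1 := hv.2
    have hb : |hker n v| * (4*π*v) ≤ |hker n v| * (4*π) := by
      refine mul_le_mul_of_nonneg_left ?_ (abs_nonneg _)
      nlinarith [pi_pos]
    exact mul_le_mul hb e2 (norm_nonneg _) (by positivity)
  · exact (((hker_integrableOn hn).abs.mul_const _).mul_const _)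
  · filter_upwards [ae_restrict_mem measurableSet_Ioc] with v hv
    intro z hz
    have base : HasDerivAt (fun z : ℂ => Complex.exp (-(4*π*(v:ℂ)) * z))
        (Complex.exp (-(4*π*(v:ℂ)) * z) * (-(4*π*(v:ℂ)))) z := by
      have h0 : HasDerivAt (fun z : ℂ => -(4*π*(v:ℂ)) * z) (-(4*π*(v:ℂ))) z := by
        simpa using (hasDerivAt_id z).const_mul (-(4*π*(v:ℂ)))
      exact h0.cexp
    have := base.const_mul ((hker n v : ℂ))
    refine this.congr_deriv ?_
    ring

lemma Gfun_analytic : AnalyticOnNhd ℂ (Gfun n) univ := by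
  refine DifferentiableOn.analyticOnNhd ?_ isOpen_univ
  intro z _
  exact ((Gfun_hasDerivAt hn z).differentiableAt).differentiableWithinAt

lemma Gfun_real (x : ℝ) :
    Gfun n x = ((∫ v in Ioc (0:ℝ) 1, hker n v * Real.exp (-4*π*x*v) : ℝ) : ℂ) := by
  have he : ∀ v : ℝ, (hker n v : ℂ) * Complex.exp (-(4*π*(v:ℂ)) * (x:ℂ))
      = ((hker n v * Real.exp (-4*π*x*v) : ℝ) : ℂ) := by
    intro v
    rw [Complex.ofReal_mul, Complex.ofReal_exp]
    congr 1
    push_cast; ring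
  rw [Gfun]
  simp only [he]
  exact integral_ofReal

lemma g_analytic :
    AnalyticOnNhd ℝ (fun x : ℝ => -(Gfun n ((x:ℂ))).re) univ := by
  have h1 : AnalyticOnNhd ℝ (Gfun n) univ := (Gfun_analytic hn).restrictScalars
  have h2 : AnalyticOnNhd ℝ (fun x : ℝ => (x : ℂ)) univ :=
    fun x _ => Complex.ofRealCLM.analyticAt x
  have h3 : AnalyticOnNhd ℝ (fun x : ℝ => Gfun n ((x:ℂ))) univ :=
    h1.comp h2 (mapsTo_univ _ _)
  have h4 : AnalyticOnNhd ℝ (fun x : ℝ => (Gfun n ((x:ℂ))).re) univ :=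
    fun x hx => (Complex.reCLM.analyticAt _).comp (h3 x hx)
  exact h4.neg

end Analytic

/-- For `n > 0`, `I⁻_n` has a singularity of type `n^{-1/2} arcsin(√(n/t))` at `t = n`. -/
theorem Iminus_arcsin_singularity (n : ℝ) (hn : 0 < n) :
    ∃ ε > (0:ℝ), ∃ g : ℝ → ℝ, AnalyticOnNhd ℝ g (Metric.ball n ε) ∧
      ∀ t ∈ Set.Ioo n (n + ε),
        Iminus n t - n ^ (-(1:ℝ) / 2) * Real.arcsin (Real.sqrt (n / t)) = g t := by
  refine ⟨1, one_pos, fun x => -(Gfun n ((x:ℂ))).re,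
    (g_analytic hn).mono (subset_univ _), ?_⟩
  intro t htmem
  have ht : n < t := htmem.1
  have key := Iminus_split hn ht
  have hIm : Iminus n t = ∫ v in Ioi (1:ℝ), fI n t v := rfl
  have hg : (Gfun n ((t:ℂ))).re = ∫ v in Ioc (0:ℝ) 1, fI n t v := by
    rw [Gfun_real hn t, Complex.ofReal_re]
    refine setIntegral_congr_fun measurableSet_Ioc (fun v hv => ?_)
    have hv0 : (0:ℝ) < v := hv.1
    have hvr : v ^ (-(1:ℝ)/2) = Real.sqrt v / v := by
      rw [show (-(1:ℝ)/2) = -((1:ℝ)/2) by norm_num, Real.rpow_neg hv0.le, ← Real.sqrt_eq_rpow]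
      rw [eq_div_iff (ne_of_gt hv0), ← Real.sqrt_mul_self hv0.le]
      field_simp
      rw [Real.sq_sqrt (Real.sqrt_nonneg _)]
    simp only [hker, fI]
    rw [hvr]
    ring
  rw [hIm, key, ← hg]
  ring
end

section
/- For Re(s) > 0 and y > 0, the n = 0 Fourier coefficient of the 1-periodic function x ↦ Σ_{ℓ∈ℤ} arcsin_s(y/√((x+ℓ)²+y²)) is ∫_{-∞}^{∞} arcsin_s(1/√((u/y)²+1)) du = y·√π·Γ(s)/Γ(s+1/2). -/
open Real MeasureTheory

/-- `arcsin_s(1/√a) = ∫₀¹ (1/√(a-t²)) ((1-t²)/(a-t²))^s dt`. -/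
noncomputable def arcsinS (s : ℂ) (a : ℝ) : ℂ :=
  ∫ t in (0:ℝ)..1,
    ((1 / Real.sqrt (a - t ^ 2) : ℝ) : ℂ) * (((1 - t ^ 2) / (a - t ^ 2) : ℝ) : ℂ) ^ s


open Set Filter

namespace ArcsinSAux

lemma measurable_cpow_const {α : Type*} [MeasurableSpace α] {f : α → ℂ} (hf : Measurable f)
    {s : ℂ} (hs : s ≠ 0) : Measurable fun x => f x ^ s := by
  have h : (fun x => f x ^ s)
      = fun x => if f x = 0 then 0 else Complex.exp (Complex.log (f x) * s) := by
    funext x; simp [Complex.cpow_def, hs]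
  rw [h]
  exact Measurable.ite (hf (measurableSet_singleton 0)) measurable_const
    (Complex.measurable_exp.comp ((Complex.measurable_log.comp hf).mul_const s))

lemma ofReal_inv_cpow {x : ℝ} (hx : 0 < x) (z : ℂ) : ((x⁻¹ : ℝ) : ℂ) ^ z = (x:ℂ) ^ (-z) := by
  push_cast
  rw [Complex.inv_cpow _ _ (by rw [Complex.arg_ofReal_of_nonneg hx.le]; exact Real.pi_ne_zero.symm),
    ← Complex.cpow_neg]

lemma ofReal_sqrt_inv {x : ℝ} (hx : 0 < x) : ((1 / Real.sqrt x : ℝ) : ℂ) = (x:ℂ) ^ (-(1/2) : ℂ) := by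
  rw [Real.sqrt_eq_rpow, one_div, ← Real.rpow_neg hx.le, Complex.ofReal_cpow hx.le]
  norm_num

lemma norm_ofReal_cpow {x : ℝ} (hx : 0 < x) (z : ℂ) : ‖(x:ℂ) ^ z‖ = x ^ z.re := by
  rw [Complex.norm_cpow_eq_rpow_re_of_pos hx]

lemma integrable_aux {σ : ℝ} (hσ : 0 < σ) : Integrable (fun w : ℝ => (w^2+1) ^ (-σ - 1/2 : ℝ)) := by
  have h := integrable_rpow_neg_one_add_norm_sq (E := ℝ) (μ := volume) (r := 2*σ+1)
    (by rw [Module.finrank_self]; push_cast; linarith)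
  have e : (fun x : ℝ => (1 + ‖x‖^2) ^ (-(2*σ+1)/2 : ℝ)) = fun w : ℝ => (w^2+1) ^ (-σ - 1/2 : ℝ) := by
    funext w
    rw [Real.norm_eq_abs, sq_abs, add_comm (1:ℝ), show -(2*σ+1)/2 = -σ - 1/2 by ring]
  rwa [e] at h

lemma cont_cf (s : ℂ) : Continuous fun w : ℝ => ((w^2+1:ℝ):ℂ) ^ (-s - 1/2) := by
  refine continuous_iff_continuousAt.2 fun w => ?_
  refine (continuousAt_cpow_const ?_).comp (by fun_prop)
  exact Complex.ofReal_mem_slitPlane.2 (by positivity)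

lemma re_aux (s : ℂ) : (-s - 1/2 : ℂ).re = -s.re - 1/2 := by
  simp [Complex.sub_re, Complex.neg_re]

lemma norm_cf (s : ℂ) (w : ℝ) : ‖((w^2+1:ℝ):ℂ) ^ (-s - 1/2)‖ = (w^2+1) ^ (-s.re - 1/2 : ℝ) := by
  rw [norm_ofReal_cpow (by positivity), re_aux]

lemma integrable_cf {s : ℂ} (hs : 0 < s.re) :
    Integrable (fun w : ℝ => ((w^2+1:ℝ):ℂ) ^ (-s - 1/2)) := by
  refine (integrable_aux hs).mono' (cont_cf s).aestronglyMeasurable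
    (Eventually.of_forall fun w => ?_)
  rw [norm_cf]

lemma K_eval {s : ℂ} (hs : 0 < s.re) :
    ∫ w : ℝ, ((w^2+1:ℝ):ℂ) ^ (-s - 1/2)
      = (Real.sqrt π : ℂ) * Complex.Gamma s / Complex.Gamma (s + 1/2) := by
  have hint := integrable_cf hs
  set f : ℝ → ℂ := fun w => ((w^2+1:ℝ):ℂ) ^ (-s - 1/2) with hf
  -- step 1: reduce to Ioi 0
  have h2 : ∫ w : ℝ, f w = ∫ w in Ioi (0:ℝ), 2 * f w := by
    rw [← intervalIntegral.integral_Iic_add_Ioi (b := (0:ℝ))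
      hint.integrableOn hint.integrableOn]
    have hneg : ∫ w in Iic (0:ℝ), f w = ∫ w in Ioi (0:ℝ), f w := by
      have h := integral_comp_neg_Ioi (0:ℝ) f
      rw [neg_zero] at h
      rw [← h]
      refine setIntegral_congr_fun measurableSet_Ioi fun w _ => ?_
      simp only [hf, neg_sq]
    rw [hneg, integral_const_mul, two_mul]
  -- change of variables
  set φ : ℝ → ℝ := fun u => 1 - (1+u^2)⁻¹ with hφ
  have hφu : ∀ u : ℝ, φ u = u^2/(1+u^2) := by
    intro u; have h1 : (0:ℝ) < 1 + u^2 := by positivity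
    rw [hφ]; field_simp; ring
  have hφderiv : ∀ u ∈ Ioi (0:ℝ), HasDerivWithinAt φ (2*u/(1+u^2)^2) (Ioi 0) u := by
    intro u _
    have h1 : (0:ℝ) < 1 + u^2 := by positivity
    have hd : HasDerivAt (fun u : ℝ => 1 + u^2) (2*u) u := by
      simpa using (hasDerivAt_pow 2 u).const_add 1
    have hd2 := (hd.inv h1.ne').const_sub 1
    refine (hd2.congr_deriv ?_).hasDerivWithinAt
    field_simp
  have hinj : InjOn φ (Ioi 0) := by
    intro a ha b hb hab
    have ha' : (0:ℝ) < a := ha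
    have hb' : (0:ℝ) < b := hb
    have h3 : ((1+a^2)⁻¹ : ℝ) = (1+b^2)⁻¹ := by
      simp only [hφ] at hab; linarith
    have h4 : (1+a^2 : ℝ) = 1+b^2 := inv_injective h3
    nlinarith
  have himg : φ '' Ioi 0 = Ioo 0 1 := by
    ext x
    constructor
    · rintro ⟨u, hu, rfl⟩
      have hu' : (0:ℝ) < u := hu
      have h1 : (0:ℝ) < 1 + u^2 := by positivity
      have h2 : ((1+u^2)⁻¹ : ℝ) < 1 := by
        rw [inv_lt_one_iff₀]; right; nlinarith
      constructor
      · simp only [hφ]; linarith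
      · simp only [hφ]
        have : (0:ℝ) < (1+u^2)⁻¹ := by positivity
        linarith
    · rintro ⟨hx0, hx1⟩
      refine ⟨Real.sqrt (x/(1-x)), ?_, ?_⟩
      · exact Real.sqrt_pos.2 (div_pos hx0 (by linarith))
      · have hsq : Real.sqrt (x/(1-x)) ^ 2 = x/(1-x) :=
          Real.sq_sqrt (div_nonneg hx0.le (by linarith))
        rw [hφ]
        simp only
        rw [hsq]
        have h1x : (1:ℝ) - x ≠ 0 := by linarith
        field_simp
        ring
  have hcv := integral_image_eq_integral_abs_deriv_smul measurableSet_Ioi hφderiv hinj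
      (fun x : ℝ => (x:ℂ) ^ ((1/2:ℂ) - 1) * (1 - (x:ℂ)) ^ (s - 1))
  rw [himg] at hcv
  have hbeta : Complex.betaIntegral (1/2) s = ∫ u in Ioi (0:ℝ), 2 * f u := by
    rw [Complex.betaIntegral, intervalIntegral.integral_of_le zero_le_one,
      integral_Ioc_eq_integral_Ioo, hcv]
    refine setIntegral_congr_fun measurableSet_Ioi fun u hu => ?_
    have hu' : (0:ℝ) < u := hu
    have h1 : (0:ℝ) < 1 + u^2 := by positivity
    have hX0 : ((1+u^2 : ℝ):ℂ) ≠ 0 := by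
      simp only [ne_eq, Complex.ofReal_eq_zero]; positivity
    have hx : (0:ℝ) < φ u := by
      rw [hφu]; positivity
    have e1 : (1 : ℂ) - ((φ u : ℝ):ℂ) = (((1+u^2)⁻¹ : ℝ) : ℂ) := by
      simp only [hφ]; push_cast; ring
    have e2 : ((((1+u^2)⁻¹ : ℝ)):ℂ) ^ (s-1) = ((1+u^2:ℝ):ℂ) ^ (-(s-1)) :=
      ofReal_inv_cpow h1 (s-1)
    have e3 : ((φ u :ℝ):ℂ) ^ ((1/2:ℂ)-1) = (((φ u) ^ (-(1/2):ℝ) : ℝ):ℂ) := by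
      rw [Complex.ofReal_cpow hx.le]; norm_num
    have hA : |2*u/(1+u^2)^2| * (φ u) ^ (-(1/2):ℝ) = 2 * (1+u^2) ^ (-(3/2):ℝ) := by
      rw [abs_of_nonneg (by positivity), hφu,
        Real.div_rpow (sq_nonneg u) h1.le]
      have hu2 : (u^2 : ℝ) ^ (-(1/2):ℝ) = u⁻¹ := by
        rw [← Real.rpow_natCast u 2, ← Real.rpow_mul hu'.le]
        norm_num [Real.rpow_neg_one]
      have hinv : (((1+u^2:ℝ)) ^ (-(1/2):ℝ))⁻¹ = (1+u^2) ^ ((1/2):ℝ) := by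
        rw [← Real.rpow_neg h1.le]; norm_num
      have h32 : ((1+u^2):ℝ) ^ (-(3/2):ℝ) = ((1+u^2) ^ ((1/2):ℝ)) / (1+u^2)^2 := by
        rw [show (-(3/2):ℝ) = 1/2 - 2 by norm_num, Real.rpow_sub h1]
        congr 1
        rw [show ((2:ℝ)) = ((2:ℕ):ℝ) by norm_num, Real.rpow_natCast]
      rw [hu2, h32, div_eq_mul_inv u⁻¹, hinv]
      field_simp
    calc |2*u/(1+u^2)^2| • (((φ u : ℝ):ℂ) ^ ((1/2:ℂ)-1) * (1 - ((φ u : ℝ):ℂ)) ^ (s-1))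
        = ((|2*u/(1+u^2)^2| * (φ u) ^ (-(1/2):ℝ) : ℝ) : ℂ) * ((1+u^2:ℝ):ℂ) ^ (-(s-1)) := by
          rw [e1, e2, e3, Complex.real_smul]
          push_cast
          ring
      _ = 2 * ((1+u^2:ℝ):ℂ) ^ (-(3/2):ℂ) * ((1+u^2:ℝ):ℂ) ^ (-(s-1)) := by
          rw [hA]
          push_cast
          rw [Complex.ofReal_cpow h1.le]
          push_cast
          ring_nf
      _ = 2 * f u := by
          rw [hf]
          simp only
          rw [mul_assoc, ← Complex.cpow_add _ _ hX0,
            show (-(3/2):ℂ) + -(s-1) = -s - 1/2 by ring,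
            show (u^2+1:ℝ) = 1+u^2 by ring]
  -- Gamma identities
  have hG := Complex.Gamma_mul_Gamma_eq_betaIntegral (s := 1/2) (t := s) (by norm_num) hs
  have hne : Complex.Gamma (1/2 + s) ≠ 0 :=
    Complex.Gamma_ne_zero_of_re_pos (by simp [Complex.add_re]; norm_num; linarith)
  have hbeta3 : Complex.betaIntegral (1/2) s
      = Complex.Gamma (1/2) * Complex.Gamma s / Complex.Gamma (1/2+s) := by
    rw [eq_div_iff hne]
    linear_combination -hG
  rw [h2, ← hbeta, hbeta3, Complex.Gamma_one_half_eq, add_comm]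
  congr 2
  rw [Real.sqrt_eq_rpow, Complex.ofReal_cpow Real.pi_pos.le]
  norm_num

end ArcsinSAux

open ArcsinSAux

/-- The `n = 0` Fourier coefficient of `x ↦ Σ_{ℓ∈ℤ} arcsin_s(y/√((x+ℓ)²+y²))` is
`∫_{-∞}^∞ arcsin_s(1/√((u/y)²+1)) du = y √π Γ(s)/Γ(s+1/2)`. -/
theorem arcsinS_zeroth_fourier_coefficient (s : ℂ) (hs : 0 < s.re) (y : ℝ) (hy : 0 < y) :
    (∫ x in (0:ℝ)..1, ∑' ℓ : ℤ, arcsinS s ((((x + ℓ) ^ 2 + y ^ 2) / y ^ 2 : ℝ))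
        = ∫ u : ℝ, arcsinS s (((u / y) ^ 2 + 1 : ℝ)))
    ∧ ∫ u : ℝ, arcsinS s (((u / y) ^ 2 + 1 : ℝ))
        = (y : ℂ) * (Real.sqrt π : ℂ) * Complex.Gamma s / Complex.Gamma (s + 1 / 2) := by
  have hs0 : s ≠ 0 := fun h => by simp [h] at hs
  have hy' : (y:ℝ) ≠ 0 := hy.ne'
  set F : ℝ → ℝ → ℂ := fun u t =>
    ((1 / Real.sqrt (((u / y) ^ 2 + 1) - t ^ 2) : ℝ) : ℂ) *
      (((1 - t ^ 2) / (((u / y) ^ 2 + 1) - t ^ 2) : ℝ) : ℂ) ^ s with hF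
  have harc : ∀ u : ℝ, arcsinS s (((u / y) ^ 2 + 1 : ℝ)) = ∫ t in Ioo (0:ℝ) 1, F u t := by
    intro u
    rw [arcsinS, intervalIntegral.integral_of_le zero_le_one, integral_Ioc_eq_integral_Ioo]
  -- pointwise simplification of `F` for `t ∈ Ioo 0 1`
  have key : ∀ t ∈ Ioo (0:ℝ) 1, ∀ u : ℝ,
      F u t = ((1/Real.sqrt (1-t^2) : ℝ):ℂ)
        * (((u/(y*Real.sqrt (1-t^2)))^2 + 1 : ℝ):ℂ) ^ (-s - 1/2) := by
    intro t ht u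
    have hc : (0:ℝ) < 1 - t^2 := by nlinarith [ht.1, ht.2]
    have hsc : (0:ℝ) < Real.sqrt (1-t^2) := Real.sqrt_pos.2 hc
    set b := y * Real.sqrt (1-t^2) with hb
    have hb0 : (0:ℝ) < b := mul_pos hy hsc
    have hb2 : b^2 = y^2 * (1-t^2) := by rw [hb, mul_pow, Real.sq_sqrt hc.le]
    set X : ℝ := (u/b)^2 + 1 with hX
    have hX0 : (0:ℝ) < X := by positivity
    have hXne : ((X:ℝ):ℂ) ≠ 0 := Complex.ofReal_ne_zero.2 hX0.ne'
    have hD : ((u/y)^2 + 1) - t^2 = (1-t^2) * X := by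
      rw [hX, div_pow, div_pow, hb2]
      field_simp
      ring
    have hcX : (1 - t^2) / (((u/y)^2+1) - t^2) = X⁻¹ := by
      rw [hD]; field_simp
    have hsqrt : (1:ℝ) / Real.sqrt (((u/y)^2+1) - t^2)
        = (1/Real.sqrt (1-t^2)) * (1/Real.sqrt X) := by
      rw [hD, Real.sqrt_mul hc.le]
      rw [one_div, mul_inv, one_div, one_div]
    rw [hF]
    simp only
    rw [hsqrt, hcX, Complex.ofReal_mul, ofReal_inv_cpow hX0 s, ofReal_sqrt_inv hX0,
      mul_assoc, ← Complex.cpow_add _ _ hXne,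
      show (-(1/2 : ℂ)) + -s = -s - 1/2 by ring]
  have keynorm : ∀ t ∈ Ioo (0:ℝ) 1, ∀ u : ℝ,
      ‖F u t‖ = (1/Real.sqrt (1-t^2))
        * (((u/(y*Real.sqrt (1-t^2)))^2 + 1 : ℝ)) ^ (-s.re - 1/2 : ℝ) := by
    intro t ht u
    have hc : (0:ℝ) < 1 - t^2 := by nlinarith [ht.1, ht.2]
    rw [key t ht u, norm_mul, norm_ofReal_cpow (by positivity), re_aux]
    congr 1
    rw [Complex.norm_real, Real.norm_eq_abs, abs_of_nonneg (by positivity)]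
  have hK := K_eval hs
  set K : ℂ := ∫ w : ℝ, ((w^2+1:ℝ):ℂ) ^ (-s - 1/2) with hKdef
  set Iσ : ℝ := ∫ w : ℝ, (w^2+1) ^ (-s.re - 1/2 : ℝ) with hIdef
  -- inner integrals
  have inner : ∀ t ∈ Ioo (0:ℝ) 1, ∫ u : ℝ, F u t = (y:ℂ) * K := by
    intro t ht
    have hc : (0:ℝ) < 1 - t^2 := by nlinarith [ht.1, ht.2]
    have hsc : (0:ℝ) < Real.sqrt (1-t^2) := Real.sqrt_pos.2 hc
    have hb0 : (0:ℝ) < y * Real.sqrt (1-t^2) := mul_pos hy hsc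
    calc ∫ u : ℝ, F u t
        = ∫ u : ℝ, ((1/Real.sqrt (1-t^2) : ℝ):ℂ)
            * (fun w : ℝ => ((w^2+1:ℝ):ℂ) ^ (-s - 1/2)) (u / (y*Real.sqrt (1-t^2))) := by
          refine integral_congr_ae (Eventually.of_forall fun u => ?_)
          simpa using key t ht u
      _ = ((1/Real.sqrt (1-t^2) : ℝ):ℂ)
            * (|y*Real.sqrt (1-t^2)| • K) := by
          rw [integral_const_mul,
            MeasureTheory.Measure.integral_comp_div
              (fun w : ℝ => ((w^2+1:ℝ):ℂ) ^ (-s - 1/2)) (y*Real.sqrt (1-t^2))]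
      _ = (y:ℂ) * K := by
          rw [abs_of_pos hb0, Complex.real_smul, ← mul_assoc, ← Complex.ofReal_mul]
          congr 2
          field_simp
  have innernorm : ∀ t ∈ Ioo (0:ℝ) 1, ∫ u : ℝ, ‖F u t‖ = y * Iσ := by
    intro t ht
    have hc : (0:ℝ) < 1 - t^2 := by nlinarith [ht.1, ht.2]
    have hsc : (0:ℝ) < Real.sqrt (1-t^2) := Real.sqrt_pos.2 hc
    have hb0 : (0:ℝ) < y * Real.sqrt (1-t^2) := mul_pos hy hsc
    calc ∫ u : ℝ, ‖F u t‖
        = ∫ u : ℝ, (1/Real.sqrt (1-t^2))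
            * (fun w : ℝ => (w^2+1) ^ (-s.re - 1/2 : ℝ)) (u / (y*Real.sqrt (1-t^2))) := by
          refine integral_congr_ae (Eventually.of_forall fun u => ?_)
          simpa using keynorm t ht u
      _ = (1/Real.sqrt (1-t^2)) * (|y*Real.sqrt (1-t^2)| • Iσ) := by
          rw [integral_const_mul,
            MeasureTheory.Measure.integral_comp_div
              (fun w : ℝ => (w^2+1) ^ (-s.re - 1/2 : ℝ)) (y*Real.sqrt (1-t^2))]
      _ = y * Iσ := by
          rw [abs_of_pos hb0, smul_eq_mul, ← mul_assoc]
          congr 1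
          field_simp
  -- measurability
  have hFmeas : Measurable (Function.uncurry F) := by
    have hD : Measurable fun p : ℝ × ℝ => ((p.1 / y) ^ 2 + 1) - p.2 ^ 2 := by fun_prop
    have m1 : Measurable fun p : ℝ × ℝ =>
        ((1 / Real.sqrt (((p.1 / y) ^ 2 + 1) - p.2 ^ 2) : ℝ) : ℂ) :=
      Complex.measurable_ofReal.comp
        (measurable_const.div (Real.continuous_sqrt.measurable.comp hD))
    have m2 : Measurable fun p : ℝ × ℝ =>
        (((1 - p.2 ^ 2) / (((p.1 / y) ^ 2 + 1) - p.2 ^ 2) : ℝ) : ℂ) ^ s := by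
      refine measurable_cpow_const (Complex.measurable_ofReal.comp ?_) hs0
      exact (by fun_prop : Measurable fun p : ℝ × ℝ => (1 - p.2 ^ 2 : ℝ)).div hD
    exact m1.mul m2
  -- product integrability
  have hIσInt : Integrable (fun w : ℝ => (w^2+1) ^ (-s.re - 1/2 : ℝ)) := integrable_aux hs
  have hInt : Integrable (Function.uncurry F)
      (volume.prod (volume.restrict (Ioo (0:ℝ) 1))) := by
    refine (integrable_prod_iff' hFmeas.aestronglyMeasurable).2 ⟨?_, ?_⟩
    · refine (ae_restrict_mem measurableSet_Ioo).mono fun t ht => ?_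
      have hc : (0:ℝ) < 1 - t^2 := by nlinarith [ht.1, ht.2]
      have hsc : (0:ℝ) < Real.sqrt (1-t^2) := Real.sqrt_pos.2 hc
      have hb0 : (y * Real.sqrt (1-t^2)) ≠ 0 := (mul_pos hy hsc).ne'
      have he : (fun u => Function.uncurry F (u, t))
          = fun u => ((1/Real.sqrt (1-t^2) : ℝ):ℂ)
            * ((((u/(y*Real.sqrt (1-t^2)))^2 + 1 : ℝ)):ℂ) ^ (-s - 1/2) :=
        funext fun u => key t ht u
      rw [he]
      exact (((integrable_cf hs).comp_div hb0).const_mul _)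
    · have hconst : IntegrableOn (fun _ : ℝ => y * Iσ) (Ioo (0:ℝ) 1) volume := by
        refine integrableOn_const ?_
        rw [Real.volume_Ioo]
        exact ENNReal.ofReal_ne_top
      refine hconst.congr ?_
      refine (ae_restrict_mem measurableSet_Ioo).mono fun t ht => ?_
      exact (innernorm t ht).symm
  have hgig : Integrable (fun u : ℝ => arcsinS s (((u / y) ^ 2 + 1 : ℝ))) := by
    have := hInt.integral_prod_left
    refine this.congr (Eventually.of_forall fun u => ?_)
    exact (harc u).symm
  -- the value of the full integral
  have part2 : ∫ u : ℝ, arcsinS s (((u / y) ^ 2 + 1 : ℝ))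
      = (y : ℂ) * (Real.sqrt π : ℂ) * Complex.Gamma s / Complex.Gamma (s + 1 / 2) := by
    have h1 : ∫ u : ℝ, arcsinS s (((u / y) ^ 2 + 1 : ℝ))
        = ∫ u : ℝ, ∫ t in Ioo (0:ℝ) 1, F u t := by
      exact integral_congr_ae (Eventually.of_forall fun u => harc u)
    rw [h1, integral_integral_swap hInt]
    rw [setIntegral_congr_fun measurableSet_Ioo fun t ht => inner t ht]
    rw [setIntegral_const, Real.volume_real_Ioo]
    norm_num
    rw [hK]
    ring
  refine ⟨?_, part2⟩
  -- part 1 : unfolding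
  have harg : ∀ v : ℝ, (((v ^ 2 + y ^ 2)/y^2 : ℝ)) = ((v/y)^2 + 1 : ℝ) := by
    intro v; field_simp
  simp_rw [harg]
  rw [intervalIntegral.integral_of_le zero_le_one]
  have hFint : ∀ ℓ : ℤ, Integrable
      (fun x : ℝ => arcsinS s ((((x + ℓ)/y)^2 + 1 : ℝ))) (volume.restrict (Ioc 0 1)) := by
    intro ℓ
    exact (hgig.comp_add_right (ℓ:ℝ)).integrableOn
  have hsum : Summable fun ℓ : ℤ =>
      ∫ x in Ioc (0:ℝ) 1, ‖arcsinS s ((((x + ℓ)/y)^2 + 1 : ℝ))‖ := by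
    have h := hgig.norm.hasSum_intervalIntegral_comp_add_int
    simp_rw [intervalIntegral.integral_of_le zero_le_one] at h
    exact h.summable
  rw [← integral_tsum_of_summable_integral_norm hFint hsum]
  have h2 := hgig.hasSum_intervalIntegral_comp_add_int
  simp_rw [intervalIntegral.integral_of_le zero_le_one] at h2
  exact h2.tsum_eq
end

section
/- Let D > 0 be a non-square discriminant and C > 0. For any compact subset K of the upper half-plane, the set of binary quadratic forms Q = [a,b,c] of discriminant D such that there exists z = x+iy ∈ K with |a|z|² + bx + c|/y ≤ C is finite. -/
open Complex

lemma aux_mem_Icc_of_abs_cast {n : ℤ} {r : ℝ} (h : |(n:ℝ)| ≤ r) :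
    n ∈ Set.Icc (-⌈r⌉) ⌈r⌉ := by
  constructor
  · have h1 : -(⌈r⌉:ℝ) ≤ (n:ℝ) := by
      have := neg_abs_le (n:ℝ)
      have := Int.le_ceil r
      linarith
    exact_mod_cast h1
  · have h1 : (n:ℝ) ≤ (⌈r⌉:ℝ) := (le_abs_self _).trans (h.trans (Int.le_ceil r))
    exact_mod_cast h1

set_option maxHeartbeats 1000000 in
/-- For a non-square discriminant `D > 0`, a constant `C > 0` and a compact subset `K`
of the upper half-plane, only finitely many binary quadratic forms `[a,b,c]` of
discriminant `D` satisfy `|a|z|² + bx + c|/y ≤ C` for some `z = x + iy ∈ K`. -/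
theorem finitely_many_forms_small_projection (D : ℤ) (hD : 0 < D) (hns : ¬ IsSquare D)
    (C : ℝ) (hC : 0 < C) (K : Set ℂ) (hK : IsCompact K) (hKH : K ⊆ {z : ℂ | 0 < z.im}) :
    {q : ℤ × ℤ × ℤ | q.2.1 ^ 2 - 4 * q.1 * q.2.2 = D ∧
      ∃ z ∈ K, |(q.1 : ℝ) * Complex.normSq z + q.2.1 * z.re + q.2.2| / z.im ≤ C}.Finite := by
  rcases K.eq_empty_or_nonempty with rfl | hne
  · simp
  obtain ⟨z₀, hz₀K, hz₀min⟩ := hK.exists_isMinOn hne Complex.continuous_im.continuousOn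
  set y₀ := z₀.im with hy₀def
  have hy₀ : 0 < y₀ := hKH hz₀K
  obtain ⟨R₀, hR₀⟩ := hK.isBounded.exists_norm_le
  set R : ℝ := max R₀ 1 with hRdef
  have hR1 : (1:ℝ) ≤ R := le_max_right _ _
  have hRpos : (0:ℝ) < R := lt_of_lt_of_le one_pos hR1
  have hzR : ∀ z ∈ K, ‖z‖ ≤ R := fun z hz => (hR₀ z hz).trans (le_max_left _ _)
  have hDpos : (0:ℝ) < (D:ℝ) := by exact_mod_cast hD
  set A : ℝ := ((D:ℝ) + 4*C*R)/(4*y₀^2) with hAdef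
  have hApos : 0 < A := by positivity
  set B : ℝ := 2*(D:ℝ) + 8*A*C*R + 8*A^2*R^2 with hBdef
  have hBpos : 0 < B := by positivity
  set Cc : ℝ := C*R + A*R^2 + B*R with hCcdef
  apply Set.Finite.subset ((Set.finite_Icc (-⌈A⌉) ⌈A⌉).prod
    ((Set.finite_Icc (-⌈B⌉) ⌈B⌉).prod (Set.finite_Icc (-⌈Cc⌉) ⌈Cc⌉)))
  rintro ⟨a, b, c⟩ ⟨hdisc, z, hzK, hq⟩
  set x : ℝ := z.re with hxdef
  set y : ℝ := z.im with hydef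
  have hy : 0 < y := hKH hzK
  have hzRn : ‖z‖ ≤ R := hzR z hzK
  have hyR : y ≤ R := le_trans (le_trans (le_abs_self _) (Complex.abs_im_le_norm z)) hzRn
  have hxR : |x| ≤ R := le_trans (Complex.abs_re_le_norm z) hzRn
  have hy₀y : y₀ ≤ y := hz₀min hzK
  have hns2 : Complex.normSq z ≤ R^2 := by
    rw [Complex.normSq_eq_norm_sq]
    exact pow_le_pow_left₀ (norm_nonneg z) hzRn 2
  have hns0 : 0 ≤ Complex.normSq z := Complex.normSq_nonneg z
  set M : ℝ := (a:ℝ) * Complex.normSq z + b * x + c with hMdef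
  have hM : |M| ≤ C * y := by
    rw [div_le_iff₀ hy] at hq
    linarith [hq]
  have hdiscR : (b:ℝ)^2 - 4*(a:ℝ)*(c:ℝ) = (D:ℝ) := by exact_mod_cast hdisc
  have hnsq : Complex.normSq z = x^2 + y^2 := by
    rw [Complex.normSq_apply]; ring
  have hkey : (2*(a:ℝ)*x + b)^2 + 4*(a:ℝ)^2*y^2 = (D:ℝ) + 4*(a:ℝ)*M := by
    rw [hMdef, hnsq, ← hdiscR]; ring
  have ha0 : a ≠ 0 := by
    rintro rfl
    exact hns ⟨b, by rw [← hdisc]; ring⟩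
  have ha1 : (1:ℝ) ≤ |(a:ℝ)| := by
    rw [← Int.cast_abs]
    exact_mod_cast Int.one_le_abs ha0
  have haM : 4*(a:ℝ)*M ≤ 4*(|(a:ℝ)| * (C*y)) := by
    have h1 : (a:ℝ)*M ≤ |(a:ℝ)*M| := le_abs_self _
    rw [abs_mul] at h1
    have h2 : |(a:ℝ)| * |M| ≤ |(a:ℝ)| * (C*y) :=
      mul_le_mul_of_nonneg_left hM (abs_nonneg _)
    linarith
  have hbound : (2*(a:ℝ)*x + b)^2 + 4*(a:ℝ)^2*y^2 ≤ (D:ℝ) + 4*(|(a:ℝ)| * (C*R)) := by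
    have hcy : C*y ≤ C*R := mul_le_mul_of_nonneg_left hyR hC.le
    have h2 : |(a:ℝ)| * (C*y) ≤ |(a:ℝ)| * (C*R) :=
      mul_le_mul_of_nonneg_left hcy (abs_nonneg _)
    linarith [hkey]
  -- bound on a
  have hA : |(a:ℝ)| ≤ A := by
    have hsq : (a:ℝ)^2 = |(a:ℝ)|^2 := (_root_.sq_abs _).symm
    have hy2 : y₀^2 ≤ y^2 := pow_le_pow_left₀ hy₀.le hy₀y 2
    have ht1 : 4*(a:ℝ)^2 * y₀^2 ≤ 4*(a:ℝ)^2 * y^2 :=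
      mul_le_mul_of_nonneg_left hy2 (by positivity)
    have ht2 : 4*(a:ℝ)^2*y^2 ≤ (D:ℝ) + 4*(|(a:ℝ)| * (C*R)) := by
      linarith [sq_nonneg (2*(a:ℝ)*x + b), hbound]
    have ht3 : (D:ℝ) ≤ |(a:ℝ)| * (D:ℝ) := le_mul_of_one_le_left hDpos.le ha1
    have hsq2 : (a:ℝ)^2 * y₀^2 = |(a:ℝ)|^2 * y₀^2 := by rw [hsq]
    have h5 : |(a:ℝ)| * (4*|(a:ℝ)| * y₀^2) ≤ |(a:ℝ)| * ((D:ℝ) + 4*C*R) := by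
      linarith [ht1, ht2, ht3, hsq2]
    have h6 : 4*|(a:ℝ)| * y₀^2 ≤ (D:ℝ) + 4*C*R :=
      le_of_mul_le_mul_left h5 (lt_of_lt_of_le one_pos ha1)
    rw [hAdef, le_div_iff₀ (by positivity)]
    linarith
  -- bound on b
  have hb2 : |(b:ℝ)| ≤ (b:ℝ)^2 := by
    rcases eq_or_ne b 0 with rfl | hb0
    · simp
    · have h1 : (1:ℝ) ≤ |(b:ℝ)| := by
        rw [← Int.cast_abs]; exact_mod_cast Int.one_le_abs hb0
      calc |(b:ℝ)| = |(b:ℝ)| * 1 := (mul_one _).symm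
        _ ≤ |(b:ℝ)| * |(b:ℝ)| := mul_le_mul_of_nonneg_left h1 (abs_nonneg _)
        _ = (b:ℝ)^2 := by rw [abs_mul_abs_self]; ring
  have haxAR : |(a:ℝ)| * |x| ≤ A * R :=
    mul_le_mul hA hxR (abs_nonneg x) (le_of_lt hApos)
  have hB : |(b:ℝ)| ≤ B := by
    have h0 : |(a:ℝ)| * (C*R) ≤ A * (C*R) :=
      mul_le_mul_of_nonneg_right hA (by positivity)
    have h1 : (2*(a:ℝ)*x + b)^2 ≤ (D:ℝ) + 4*A*C*R := by
      linarith [sq_nonneg ((a:ℝ)*y), hbound, h0]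
    have h2 : (b:ℝ)^2 ≤ 2*(2*(a:ℝ)*x+b)^2 + 8*((a:ℝ)*x)^2 := by
      linarith [sq_nonneg (4*(a:ℝ)*x + b)]
    have h3 : ((a:ℝ)*x)^2 ≤ (A*R)^2 := by
      have h4 : |(a:ℝ)*x| ≤ A*R := by rw [abs_mul]; exact haxAR
      calc ((a:ℝ)*x)^2 = |(a:ℝ)*x|^2 := (_root_.sq_abs _).symm
        _ ≤ (A*R)^2 := pow_le_pow_left₀ (abs_nonneg _) h4 2
    have : (b:ℝ)^2 ≤ B := by rw [hBdef]; linarith [h1, h2, h3]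
    linarith [hb2]
  -- bound on c
  have hCc : |(c:ℝ)| ≤ Cc := by
    have hans : |(a:ℝ) * Complex.normSq z| ≤ A * R^2 := by
      rw [abs_mul, _root_.abs_of_nonneg hns0]
      exact mul_le_mul hA hns2 hns0 (le_of_lt hApos)
    have hbx : |(b:ℝ) * x| ≤ B * R := by
      rw [abs_mul]
      exact mul_le_mul hB hxR (abs_nonneg x) (le_of_lt hBpos)
    have hc : (c:ℝ) = M - (a:ℝ)*Complex.normSq z - (b:ℝ)*x := by
      rw [hMdef]; ring
    have hcy2 : C*y ≤ C*R := mul_le_mul_of_nonneg_left hyR hC.le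
    rw [abs_le] at hM hans hbx ⊢
    constructor
    · rw [hCcdef]; linarith [hM.1, hans.2, hbx.2, hcy2]
    · rw [hCcdef]; linarith [hM.2, hans.1, hbx.1, hcy2]
  exact ⟨aux_mem_Icc_of_abs_cast hA, aux_mem_Icc_of_abs_cast hB, aux_mem_Icc_of_abs_cast hCc⟩
end
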